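/- Let Q be a probability measure on ℝ^d satisfying a Poincaré inequality with constant c. Suppose the nonnegative loss ℓ(·,z) has G-Lipschitz gradients for all z, and both ℓ(·,z) and ‖∇_hℓ(·,z)‖² belong to H¹(Q). Then for every z: E_{h∼Q}[(‖∇_h ℓ(h,z)‖²)²] ≤ 4cG²·E_{h∼Q}[‖∇_h ℓ(h,z)‖²] + (E_{h∼Q}[‖∇_h ℓ(h,z)‖²])², using that the gradient of h ↦ ‖∇_hℓ(h,z)‖² has norm at most 2G‖∇_hℓ(h,z)‖. -/

import Mathlib

open MeasureTheory

/-- Membership in the Sobolev space `H¹(Q)`. -/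
def MemH1 {d : ℕ} (Q : Measure (EuclideanSpace ℝ (Fin d)))
    (f : EuclideanSpace ℝ (Fin d) → ℝ) : Prop :=
  Differentiable ℝ f ∧ MemLp f 2 Q ∧ MemLp (fun h => ‖gradient f h‖) 2 Q

theorem norm_gradient_eq {d : ℕ} (f : EuclideanSpace ℝ (Fin d) → ℝ)
    (x : EuclideanSpace ℝ (Fin d)) : ‖gradient f x‖ = ‖fderiv ℝ f x‖ := by
  rw [gradient]
  exact LinearIsometryEquiv.norm_map _ _

/-- Gradient norm bound for the squared norm of a Lipschitz map. -/
theorem gradient_sq_norm_le {d : ℕ} (g : EuclideanSpace ℝ (Fin d) → EuclideanSpace ℝ (Fin d))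
    (G : ℝ) (hG : 0 < G) (hLip : LipschitzWith (Real.toNNReal G) g)
    (h : EuclideanSpace ℝ (Fin d)) :
    ‖gradient (fun x => ‖g x‖ ^ 2) h‖ ≤ 2 * G * ‖g h‖ := by
  rw [norm_gradient_eq]
  have key : ∀ ε : ℝ, 0 < ε → ‖fderiv ℝ (fun x => ‖g x‖ ^ 2) h‖ ≤ 2 * G * ‖g h‖ + ε := by
    intro ε hε
    refine norm_fderiv_le_of_lip' ℝ (by positivity) ?_
    have hball : Metric.ball h (ε / (G * G)) ∈ nhds h :=
      Metric.ball_mem_nhds h (by positivity)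
    filter_upwards [hball] with x hx
    have hxh : ‖x - h‖ < ε / (G * G) := by
      rwa [Metric.mem_ball, dist_eq_norm] at hx
    have hlip : ‖g x - g h‖ ≤ G * ‖x - h‖ := by
      have := hLip.dist_le_mul x h
      rw [dist_eq_norm, dist_eq_norm] at this
      calc ‖g x - g h‖ ≤ (Real.toNNReal G : ℝ) * ‖x - h‖ := this
        _ = G * ‖x - h‖ := by rw [Real.coe_toNNReal _ hG.le]
    have h1 : |‖g x‖ - ‖g h‖| ≤ G * ‖x - h‖ :=
      le_trans (abs_norm_sub_norm_le _ _) hlip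
    have h2 : ‖g x‖ + ‖g h‖ ≤ 2 * ‖g h‖ + G * ‖x - h‖ := by
      have : ‖g x‖ ≤ ‖g h‖ + G * ‖x - h‖ := by
        have := abs_le.mp h1
        linarith [this.2]
      linarith
    have hfactor : ‖g x‖ ^ 2 - ‖g h‖ ^ 2 = (‖g x‖ + ‖g h‖) * (‖g x‖ - ‖g h‖) := by ring
    have habs : |‖g x‖ ^ 2 - ‖g h‖ ^ 2| ≤ (2 * ‖g h‖ + G * ‖x - h‖) * (G * ‖x - h‖) := by
      rw [hfactor, abs_mul]
      have hA : |‖g x‖ + ‖g h‖| = ‖g x‖ + ‖g h‖ := abs_of_nonneg (by positivity)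
      rw [hA]
      exact mul_le_mul h2 h1 (abs_nonneg _) (by positivity)
    rw [Real.norm_eq_abs]
    calc |‖g x‖ ^ 2 - ‖g h‖ ^ 2|
        ≤ (2 * ‖g h‖ + G * ‖x - h‖) * (G * ‖x - h‖) := habs
      _ = (2 * G * ‖g h‖ + G * G * ‖x - h‖) * ‖x - h‖ := by ring
      _ ≤ (2 * G * ‖g h‖ + ε) * ‖x - h‖ := by
          have : G * G * ‖x - h‖ ≤ ε := by
            have := (le_div_iff₀ (by positivity : (0:ℝ) < G * G)).mp hxh.le
            calc G * G * ‖x - h‖ = ‖x - h‖ * (G * G) := by ring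
              _ ≤ ε := by
                  have h' := (div_le_iff₀ (by positivity : (0:ℝ) < G * G)).mp (le_refl (ε / (G*G)))
                  nlinarith [norm_nonneg (x - h), hxh]
          nlinarith [norm_nonneg (x - h)]
  by_contra hcon
  push_neg at hcon
  have := key ((‖fderiv ℝ (fun x => ‖g x‖ ^ 2) h‖ - 2 * G * ‖g h‖) / 2) (by linarith)
  linarith

/-- second moment bound on squared gradient norms under a Poincaré
inequality, for losses with `G`-Lipschitz gradients. -/
theorem grad_sq_second_moment_of_poincare
    {d : ℕ} {Z : Type*} [MeasurableSpace Z]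
    (Q : Measure (EuclideanSpace ℝ (Fin d))) [IsProbabilityMeasure Q]
    (c : ℝ) (hc : 0 < c)
    (hPoinc : ∀ f : EuclideanSpace ℝ (Fin d) → ℝ, MemH1 Q f →
      ∫ h, (f h - ∫ h', f h' ∂Q) ^ 2 ∂Q ≤ c * ∫ h, ‖gradient f h‖ ^ 2 ∂Q)
    (ℓ : EuclideanSpace ℝ (Fin d) → Z → ℝ)
    (hnonneg : ∀ h z, 0 ≤ ℓ h z)
    (G : ℝ) (hG : 0 < G)
    (hLip : ∀ z, LipschitzWith (Real.toNNReal G) (gradient (fun h => ℓ h z)))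
    (hH1 : ∀ z, MemH1 Q (fun h => ℓ h z))
    (hH1g : ∀ z, MemH1 Q (fun h => ‖gradient (fun h' => ℓ h' z) h‖ ^ 2)) :
    ∀ z, ∫ h, (‖gradient (fun h' => ℓ h' z) h‖ ^ 2) ^ 2 ∂Q
      ≤ 4 * c * G ^ 2 * ∫ h, ‖gradient (fun h' => ℓ h' z) h‖ ^ 2 ∂Q
        + (∫ h, ‖gradient (fun h' => ℓ h' z) h‖ ^ 2 ∂Q) ^ 2 := by
  intro z
  set g : EuclideanSpace ℝ (Fin d) → EuclideanSpace ℝ (Fin d) :=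
    gradient (fun h => ℓ h z) with hg
  set f : EuclideanSpace ℝ (Fin d) → ℝ := fun h => ‖g h‖ ^ 2 with hf
  obtain ⟨hdiff, hL2, hgradL2⟩ := hH1g z
  have int_f : Integrable f Q := hL2.integrable (by norm_num)
  have int_f2 : Integrable (fun h => f h ^ 2) Q := hL2.integrable_sq
  have int_grad : Integrable (fun h => ‖gradient f h‖ ^ 2) Q := hgradL2.integrable_sq
  set m : ℝ := ∫ h, f h ∂Q with hm
  -- variance decomposition
  have hvar : ∫ h, (f h - m) ^ 2 ∂Q = (∫ h, f h ^ 2 ∂Q) - m ^ 2 := by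
    have hexp : ∀ h, (f h - m) ^ 2 = f h ^ 2 - 2 * m * f h + m ^ 2 := by
      intro h; ring
    simp_rw [hexp]
    rw [integral_add (by exact (int_f2.sub (int_f.const_mul (2 * m))) ) (integrable_const _),
        integral_sub int_f2 (int_f.const_mul (2 * m)), integral_const_mul,
        integral_const]
    simp [hm]
    ring
  -- Poincaré
  have hpc := hPoinc f ⟨hdiff, hL2, hgradL2⟩
  -- pointwise gradient bound
  have hpt : ∀ h, ‖gradient f h‖ ^ 2 ≤ 4 * G ^ 2 * f h := by
    intro h
    have hb := gradient_sq_norm_le g G hG (hLip z) h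
    have h0 : 0 ≤ ‖gradient f h‖ := norm_nonneg _
    calc ‖gradient f h‖ ^ 2 ≤ (2 * G * ‖g h‖) ^ 2 := by
          apply sq_le_sq' _ hb
          nlinarith [norm_nonneg (g h)]
      _ = 4 * G ^ 2 * f h := by rw [hf]; ring
  have hmono : ∫ h, ‖gradient f h‖ ^ 2 ∂Q ≤ ∫ h, 4 * G ^ 2 * f h ∂Q :=
    integral_mono int_grad (int_f.const_mul _) hpt
  have h4 : ∫ h, 4 * G ^ 2 * f h ∂Q = 4 * G ^ 2 * m := by
    rw [integral_const_mul, hm]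
  calc ∫ h, f h ^ 2 ∂Q = (∫ h, (f h - m) ^ 2 ∂Q) + m ^ 2 := by rw [hvar]; ring
    _ ≤ c * (∫ h, ‖gradient f h‖ ^ 2 ∂Q) + m ^ 2 := by linarith
    _ ≤ c * (4 * G ^ 2 * m) + m ^ 2 := by
        have := hmono.trans_eq h4
        nlinarith
    _ = 4 * c * G ^ 2 * m + m ^ 2 := by ring
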